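/- Let μ > 0, α ∈ ℝ with μ > 2|α| − α, and let φ ∈ H²(0,1) (complex valued) satisfy φ'(1) = 0. Then ∫₀¹|φ''|² dy + (α/μ)|φ'(0)|² ≥ (1 − (2|α|−α)/μ)·∫₀¹|φ'|² dy. -/

import Mathlib

open MeasureTheory Set intervalIntegral
open scoped RealInnerProductSpace

/-- Cauchy–Schwarz: for a nonnegative continuous function on `[0,1]`,
`(∫ g)² ≤ ∫ g²`. -/
lemma cs_aux {g : ℝ → ℝ} (hg : Continuous g) (hg0 : ∀ y, 0 ≤ g y) :
    (∫ y in (0:ℝ)..1, g y) ^ 2 ≤ ∫ y in (0:ℝ)..1, g y ^ 2 := by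
  set μ : Measure ℝ := volume.restrict (Set.Ioc (0:ℝ) 1) with hμdef
  haveI hprob : IsProbabilityMeasure μ := ⟨by simp [hμdef]⟩
  obtain ⟨C, hC⟩ : ∃ C, ∀ x ∈ Set.Icc (0:ℝ) 1, ‖g x‖ ≤ C :=
    isCompact_Icc.exists_bound_of_continuousOn hg.continuousOn
  have hgm : MemLp g (ENNReal.ofReal 2) μ := by
    refine MemLp.of_bound hg.aestronglyMeasurable C ?_
    filter_upwards [ae_restrict_mem measurableSet_Ioc] with x hx
    exact hC x ⟨hx.1.le, hx.2⟩
  have hpq : Real.HolderConjugate 2 2 := Real.HolderConjugate.two_two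
  have h := integral_mul_le_Lp_mul_Lq_of_nonneg hpq
    (f := fun _ => (1:ℝ)) (g := g)
    (Filter.Eventually.of_forall fun _ => zero_le_one)
    (Filter.Eventually.of_forall fun x => hg0 x)
    (memLp_const 1) hgm
  simp only [one_mul] at h
  have h1 : (∫ a, (1:ℝ) ^ (2:ℝ) ∂μ) = 1 := by simp
  rw [h1] at h
  have h2 : ∀ a, g a ^ (2:ℝ) = g a ^ (2:ℕ) := fun a => by
    rw [← Real.rpow_natCast (g a) 2]; norm_num
  simp only [h2] at h
  have hint0 : (0:ℝ) ≤ ∫ a, g a ^ (2:ℕ) ∂μ :=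
    integral_nonneg fun a => by positivity
  have hgi0 : (0:ℝ) ≤ ∫ a, g a ∂μ := integral_nonneg hg0
  have h' : (∫ a, g a ∂μ) ^ 2 ≤ ((∫ a, g a ^ (2:ℕ) ∂μ) ^ ((1:ℝ)/2)) ^ 2 := by
    have := pow_le_pow_left₀ hgi0 (by simpa using h) 2
    simpa using this
  have h'' : ((∫ a, g a ^ (2:ℕ) ∂μ) ^ ((1:ℝ)/2)) ^ 2 = ∫ a, g a ^ (2:ℕ) ∂μ := by
    rw [← Real.rpow_natCast ((∫ a, g a ^ (2:ℕ) ∂μ) ^ ((1:ℝ)/2)) 2,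
      ← Real.rpow_mul hint0]
    norm_num
  rw [h''] at h'
  rw [intervalIntegral.integral_of_le (by norm_num : (0:ℝ) ≤ 1),
    intervalIntegral.integral_of_le (by norm_num : (0:ℝ) ≤ 1)]
  exact h'

/-- Estimate (3.15): weighted second-order energy bound, single Navier boundary. -/
theorem stmt_12 (μ α : ℝ) (hμ : 0 < μ) (hμα : μ > 2 * |α| - α)
    (φ : ℝ → ℂ) (hφ : ContDiff ℝ 2 φ) (hbc : deriv φ 1 = 0) :
    (∫ y in (0:ℝ)..1, ‖deriv (deriv φ) y‖ ^ 2) + (α / μ) * ‖deriv φ 0‖ ^ 2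
      ≥ (1 - (2 * |α| - α) / μ) * ∫ y in (0:ℝ)..1, ‖deriv φ y‖ ^ 2 := by
  set f := deriv φ with hfdef
  have hφ' : ContDiff ℝ (1 + 1) φ := by
    norm_num [hφ]
  have hf1 : ContDiff ℝ 1 f := (contDiff_succ_iff_deriv.mp hφ').2.2
  have hfd : Differentiable ℝ f := hf1.differentiable one_ne_zero
  have hfc : Continuous f := hf1.continuous
  have hf'c : Continuous (deriv f) := hf1.continuous_deriv le_rfl
  have hbc' : f 1 = 0 := hbc
  set A := ∫ y in (0:ℝ)..1, ‖deriv f y‖ ^ 2 with hAdef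
  set B := ∫ y in (0:ℝ)..1, ‖f y‖ ^ 2 with hBdef
  set D := ‖f 0‖ ^ 2 with hDdef
  have hA0 : 0 ≤ A := intervalIntegral.integral_nonneg (by norm_num)
    (fun y _ => by positivity)
  have hB0 : 0 ≤ B := intervalIntegral.integral_nonneg (by norm_num)
    (fun y _ => by positivity)
  have hD0 : 0 ≤ D := by positivity
  -- integrability facts
  have hiA : IntervalIntegrable (fun y => ‖deriv f y‖ ^ 2) volume 0 1 :=
    ((hf'c.norm.pow 2).intervalIntegrable 0 1)
  have hiB : IntervalIntegrable (fun y => ‖f y‖ ^ 2) volume 0 1 :=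
    ((hfc.norm.pow 2).intervalIntegrable 0 1)
  -- Step 1 : D ≤ B + A
  have hinnerc : Continuous (fun y => (2:ℝ) * (inner ℝ (f y) (deriv f y) : ℝ)) :=
    continuous_const.mul (hfc.inner hf'c)
  have hFTC : (∫ y in (0:ℝ)..1, 2 * (inner ℝ (f y) (deriv f y) : ℝ))
      = ‖f 1‖ ^ 2 - ‖f 0‖ ^ 2 := by
    refine intervalIntegral.integral_eq_sub_of_hasDerivAt
      (f := fun y => ‖f y‖ ^ 2) (fun x _ => ?_) (hinnerc.intervalIntegrable 0 1)
    exact ((hfd x).hasDerivAt).norm_sq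
  have hD_eq : D = - ∫ y in (0:ℝ)..1, 2 * (inner ℝ (f y) (deriv f y) : ℝ) := by
    rw [hFTC, hbc']; simp [hDdef]
  have hptwise : ∀ x ∈ Set.Icc (0:ℝ) 1,
      -(‖f x‖ ^ 2 + ‖deriv f x‖ ^ 2) ≤ 2 * (inner ℝ (f x) (deriv f x) : ℝ) := by
    intro x _
    have h1 : -(‖f x‖ * ‖deriv f x‖) ≤ (inner ℝ (f x) (deriv f x) : ℝ) := by
      have := abs_real_inner_le_norm (f x) (deriv f x)
      linarith [neg_abs_le ((inner ℝ (f x) (deriv f x) : ℝ))]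
    nlinarith [sq_nonneg (‖f x‖ - ‖deriv f x‖)]
  have hmono : (∫ y in (0:ℝ)..1, -(‖f y‖ ^ 2 + ‖deriv f y‖ ^ 2))
      ≤ ∫ y in (0:ℝ)..1, 2 * (inner ℝ (f y) (deriv f y) : ℝ) :=
    intervalIntegral.integral_mono_on (by norm_num)
      ((hiB.add hiA).neg) (hinnerc.intervalIntegrable 0 1) hptwise
  have hDle : D ≤ B + A := by
    have : (∫ y in (0:ℝ)..1, -(‖f y‖ ^ 2 + ‖deriv f y‖ ^ 2)) = -(B + A) := by
      rw [intervalIntegral.integral_neg, intervalIntegral.integral_add hiB hiA]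
    rw [hD_eq]
    linarith [hmono, this ▸ hmono]
  -- Step 2 : B ≤ A  (Poincaré)
  have hpoin_pt : ∀ x ∈ Set.Icc (0:ℝ) 1, ‖f x‖ ^ 2 ≤ A := by
    intro x hx
    have hFTC2 : (∫ t in x..1, deriv f t) = f 1 - f x :=
      intervalIntegral.integral_eq_sub_of_hasDerivAt
        (fun t _ => (hfd t).hasDerivAt) (hf'c.intervalIntegrable x 1)
    have h1 : ‖f x‖ ≤ ∫ t in x..1, ‖deriv f t‖ := by
      have : ‖f x‖ = ‖∫ t in x..1, deriv f t‖ := by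
        rw [hFTC2, hbc']; simp
      rw [this]
      exact intervalIntegral.norm_integral_le_integral_norm hx.2
    have h2 : (∫ t in x..1, ‖deriv f t‖) ≤ ∫ t in (0:ℝ)..1, ‖deriv f t‖ :=
      intervalIntegral.integral_mono_interval hx.1 hx.2 le_rfl
        (Filter.Eventually.of_forall fun t => norm_nonneg _)
        (hf'c.norm.intervalIntegrable 0 1)
    have h3 : (∫ t in (0:ℝ)..1, ‖deriv f t‖) ^ 2 ≤ A :=
      cs_aux hf'c.norm (fun t => norm_nonneg _)
    have h4 : ‖f x‖ ^ 2 ≤ (∫ t in (0:ℝ)..1, ‖deriv f t‖) ^ 2 :=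
      pow_le_pow_left₀ (norm_nonneg _) (h1.trans h2) 2
    exact h4.trans h3
  have hBA : B ≤ A := by
    have : B ≤ ∫ _ in (0:ℝ)..1, A :=
      intervalIntegral.integral_mono_on (by norm_num) hiB
        (intervalIntegrable_const) hpoin_pt
    simpa using this
  -- Step 3 : arithmetic
  have hnum : μ * A + α * D - (μ - (2 * |α| - α)) * B ≥ 0 := by
    rcases le_or_gt 0 α with hα | hα
    · rw [abs_of_nonneg hα]
      nlinarith [mul_nonneg hα hD0, mul_nonneg hα hB0]
    · rw [abs_of_neg hα]
      have hαD : α * D ≥ α * (A + B) :=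
        mul_le_mul_of_nonpos_left (by linarith : D ≤ A + B) hα.le
      have hμα' : μ + α > 0 := by
        rw [abs_of_neg hα] at hμα; linarith
      nlinarith [mul_nonneg hμα'.le (sub_nonneg.mpr hBA), mul_nonneg (neg_nonneg.mpr hα.le) hB0]
  have key : A + (α / μ) * D - (1 - (2 * |α| - α) / μ) * B
      = (μ * A + α * D - (μ - (2 * |α| - α)) * B) / μ := by
    field_simp
  have : A + (α / μ) * D - (1 - (2 * |α| - α) / μ) * B ≥ 0 := by
    rw [key]
    exact div_nonneg hnum hμ.le
  linarith
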